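/- Fix N ≥ 1, let w̃ be a filter on ZMod N, and let w = w̃ ⋆ w̃ be the associated double convolution filter. Then for every natural number p ≥ 1 and every s : ZMod N → ℂ, the iterates of the fluctuation operator satisfy ‖𝒱_w^{p+1} s − 𝒱_w^p s‖₂ ≤ ‖s‖₂ / (e · p), where ‖t‖₂ = sqrt(Σ_g |t(g)|²) and e = exp(1). -/

import Mathlib

open Finset
open scoped ComplexInnerProductSpace
/-- The fluctuation operator `𝒱_w s = s − w ⋆ s` on `ZMod N`, for a real-valued
`w` acting on a complex signal `s`. -/
noncomputable def fluctuation {N : ℕ} [NeZero N] (w : ZMod N → ℝ) (s : ZMod N → ℂ) :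
    ZMod N → ℂ :=
  fun g => s g - ∑ h : ZMod N, (w (g - h) : ℂ) * s h

/-- The Euclidean norm `‖t‖₂ = sqrt(Σ_g |t(g)|²)` on `ZMod N → ℂ`. -/
noncomputable def l2norm {N : ℕ} [NeZero N] (t : ZMod N → ℂ) : ℝ :=
  Real.sqrt (∑ g : ZMod N, ‖t g‖ ^ 2)
noncomputable def convT {N : ℕ} [NeZero N] (wt : ZMod N → ℝ) :
    EuclideanSpace ℂ (ZMod N) →ₗ[ℂ] EuclideanSpace ℂ (ZMod N) where
  toFun x := WithLp.toLp 2 (fun g => ∑ h : ZMod N, (wt (g - h) : ℂ) * x h)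
  map_add' x y := by
    ext g
    simp [PiLp.add_apply, mul_add, Finset.sum_add_distrib]
  map_smul' c x := by
    ext g
    simp only [PiLp.smul_apply, smul_eq_mul, RingHom.id_apply, Finset.mul_sum]
    exact Finset.sum_congr rfl (fun h _ => by ring)

lemma convT_apply {N : ℕ} [NeZero N] (wt : ZMod N → ℝ) (x : EuclideanSpace ℂ (ZMod N))
    (g : ZMod N) : convT wt x g = ∑ h : ZMod N, (wt (g - h) : ℂ) * x h := rfl

lemma convT_symm {N : ℕ} [NeZero N] (wt : ZMod N → ℝ) (hwe : ∀ g, wt (-g) = wt g) :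
    (convT wt).IsSymmetric := by
  intro x y
  simp only [PiLp.inner_apply, RCLike.inner_apply, convT_apply, map_sum, map_mul,
    Complex.conj_ofReal, Finset.sum_mul, Finset.mul_sum]
  rw [Finset.sum_comm]
  apply Finset.sum_congr rfl; intro h _
  apply Finset.sum_congr rfl; intro g _
  have he : wt (g - h) = wt (h - g) := by rw [← neg_sub h g, hwe]
  rw [he]; ring

lemma convT_norm {N : ℕ} [NeZero N] (wt : ZMod N → ℝ) (hw0 : ∀ g, 0 ≤ wt g)
    (hw1 : ∑ g : ZMod N, wt g = 1) (x : EuclideanSpace ℂ (ZMod N)) :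
    ‖convT wt x‖ ≤ ‖x‖ := by
  set S : ZMod N → EuclideanSpace ℂ (ZMod N) := fun h => WithLp.toLp 2 (fun g => x (g - h)) with hS
  have hSnorm : ∀ h, ‖S h‖ = ‖x‖ := by
    intro h
    rw [EuclideanSpace.norm_eq, EuclideanSpace.norm_eq]
    congr 1
    exact Fintype.sum_equiv (Equiv.subRight h) _ _ (fun g => rfl)
  have hx : convT wt x = ∑ h : ZMod N, (wt h : ℂ) • S h := by
    ext g
    have happ : (∑ h : ZMod N, (wt h : ℂ) • S h) g = ∑ h : ZMod N, (wt h : ℂ) * S h g := by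
      exact map_sum ((PiLp.projₗ 2 (fun _ : ZMod N => ℂ) g : EuclideanSpace ℂ (ZMod N) →ₗ[ℂ] ℂ)) (fun h => (wt h : ℂ) • S h) Finset.univ
    rw [happ, convT_apply]
    exact Fintype.sum_equiv (Equiv.subLeft g) _ _ (fun h => by
      simp only [hS, Equiv.subLeft_apply]
      rw [sub_sub_cancel])
  calc ‖convT wt x‖ = ‖∑ h : ZMod N, (wt h : ℂ) • S h‖ := by rw [hx]
    _ ≤ ∑ h : ZMod N, ‖(wt h : ℂ) • S h‖ := norm_sum_le _ _
    _ = ∑ h : ZMod N, wt h * ‖x‖ := by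
        apply Finset.sum_congr rfl; intro h _
        rw [norm_smul, hSnorm h, Complex.norm_real, Real.norm_of_nonneg (hw0 h)]
    _ = ‖x‖ := by rw [← Finset.sum_mul, hw1, one_mul]

lemma fluctuation_eq {N : ℕ} [NeZero N] (wt : ZMod N → ℝ) (w : ZMod N → ℝ)
    (hw : ∀ g, w g = ∑ h : ZMod N, wt (g - h) * wt h) (t : ZMod N → ℂ) :
    (WithLp.toLp 2 (fluctuation w t) : EuclideanSpace ℂ (ZMod N)) = WithLp.toLp 2 t - convT wt (convT wt (WithLp.toLp 2 t)) := by
  ext g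
  have hsub : (WithLp.toLp 2 t - convT wt (convT wt (WithLp.toLp 2 t))) g = t g - convT wt (convT wt (WithLp.toLp 2 t)) g := rfl
  rw [hsub]
  show t g - (∑ h : ZMod N, (w (g - h) : ℂ) * t h) = _
  congr 1
  rw [convT_apply]
  have : ∀ h : ZMod N, (w (g - h) : ℂ) = ∑ k : ZMod N, (wt (g - k) : ℂ) * wt (k - h) := by
    intro h
    rw [hw]; push_cast
    exact Fintype.sum_equiv (Equiv.addRight h) _ _ (fun j => by
      simp only [Equiv.coe_addRight]
      have h1 : g - h - j = g - (j + h) := by ring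
      have h2 : j + h - h = j := by ring
      rw [h1, h2])
  simp only [this, Finset.sum_mul, convT_apply, Finset.mul_sum]
  rw [Finset.sum_comm]
  apply Finset.sum_congr rfl; intro k _
  apply Finset.sum_congr rfl; intro h _
  ring

lemma scalar_ineq (p : ℕ) (hp : 1 ≤ p) {l : ℝ} (h0 : 0 ≤ l) (h1 : l ≤ 1) :
    l * (1 - l) ^ p ≤ 1 / (Real.exp 1 * p) := by
  have hp0 : (0:ℝ) < p := by exact_mod_cast hp
  have he : (0:ℝ) < Real.exp 1 := Real.exp_pos 1
  have h2 : (1 - l) ^ p ≤ Real.exp (-(p * l)) := by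
    have h2a : (1 - l) ≤ Real.exp (-l) := by
      have := Real.add_one_le_exp (-l); linarith
    calc (1 - l) ^ p ≤ (Real.exp (-l)) ^ p := by
          apply pow_le_pow_left₀ (by linarith) h2a
      _ = Real.exp (-(p * l)) := by
          rw [← Real.exp_nat_mul]; ring_nf
  have h3 : l * Real.exp (-(p * l)) ≤ 1 / (Real.exp 1 * p) := by
    set t : ℝ := p * l with ht
    have ht0 : 0 ≤ t := by positivity
    have key : t * Real.exp (-t) ≤ 1 / Real.exp 1 := by
      have h4 : t ≤ Real.exp (t - 1) := by
        have := Real.add_one_le_exp (t - 1); linarith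
      have h5 : Real.exp (t-1) * Real.exp (-t) = 1 / Real.exp 1 := by
        rw [← Real.exp_add]
        have h6 : t - 1 + -t = -1 := by ring
        rw [h6, Real.exp_neg, one_div]
      calc t * Real.exp (-t) ≤ Real.exp (t-1) * Real.exp (-t) := by
            apply mul_le_mul_of_nonneg_right h4 (Real.exp_pos _).le
        _ = 1 / Real.exp 1 := h5
    have heq : l * Real.exp (-(p*l)) = (t * Real.exp (-t)) / p := by
      rw [ht]; field_simp
    rw [heq, div_le_div_iff₀ hp0 (by positivity)]
    calc t * Real.exp (-t) * (Real.exp 1 * p) ≤ (1/Real.exp 1) * (Real.exp 1 * p) := by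
          apply mul_le_mul_of_nonneg_right key (by positivity)
      _ = p := by field_simp
      _ = 1 * p := by ring
  calc l * (1-l)^p ≤ l * Real.exp (-(p*l)) := mul_le_mul_of_nonneg_left h2 h0
    _ ≤ 1 / (Real.exp 1 * p) := h3

theorem fluctuation_iterate_diff_norm (N : ℕ) [NeZero N] (hN : 1 ≤ N)
    (wt : ZMod N → ℝ)
    (hw0 : ∀ g, 0 ≤ wt g) (hwe : ∀ g, wt (-g) = wt g) (hw1 : ∑ g : ZMod N, wt g = 1)
    (w : ZMod N → ℝ) (hw : ∀ g, w g = ∑ h : ZMod N, wt (g - h) * wt h)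
    (p : ℕ) (hp : 1 ≤ p) (s : ZMod N → ℂ) :
    l2norm (fun g => (fluctuation w)^[p + 1] s g - (fluctuation w)^[p] s g) ≤
      l2norm s / (Real.exp 1 * p) := by
  classical
  have hl2 : ∀ t : EuclideanSpace ℂ (ZMod N), l2norm t = ‖t‖ := by
    intro t; rw [l2norm, EuclideanSpace.norm_eq]
  set sE : EuclideanSpace ℂ (ZMod N) := WithLp.toLp 2 s with hsEdef
  set T := convT wt with hT
  have hsym : T.IsSymmetric := convT_symm wt hwe
  have hn : Module.finrank ℂ (EuclideanSpace ℂ (ZMod N)) = N := by simp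
  set b := hsym.eigenvectorBasis hn with hb
  set μ := hsym.eigenvalues hn with hμdef
  have happly : ∀ i, T (b i) = (μ i : ℂ) • b i := fun i => hsym.apply_eigenvectorBasis hn i
  have hμ1 : ∀ i, μ i ^ 2 ≤ 1 := by
    intro i
    have h1 : ‖T (b i)‖ ≤ ‖b i‖ := convT_norm wt hw0 hw1 _
    rw [happly, norm_smul] at h1
    have hbn : ‖b i‖ = 1 := b.orthonormal.1 i
    rw [hbn, mul_one] at h1
    have habs : |μ i| ≤ 1 := by rwa [Complex.norm_real, Real.norm_eq_abs] at h1
    calc μ i ^ 2 = |μ i| ^ 2 := (sq_abs _).symm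
      _ ≤ 1 := by nlinarith [abs_nonneg (μ i)]
  have hrepr : ∀ (t : EuclideanSpace ℂ (ZMod N)) (i : Fin N),
      b.repr (T t) i = (μ i : ℂ) * b.repr t i := by
    intro t i
    rw [b.repr_apply_apply, b.repr_apply_apply]
    calc (inner ℂ (b i) (T t) : ℂ) = inner ℂ (T (b i)) t := (hsym (b i) t).symm
      _ = inner ℂ ((μ i : ℂ) • b i) t := by rw [happly]
      _ = (μ i : ℂ) * inner ℂ (b i) t := by rw [inner_smul_left, Complex.conj_ofReal]
  have hiter : ∀ (q : ℕ) (t : EuclideanSpace ℂ (ZMod N)) (i : Fin N),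
      b.repr (WithLp.toLp 2 ((fluctuation w)^[q] t)) i = (1 - (μ i : ℂ)^2)^q * b.repr t i := by
    intro q
    induction q with
    | zero => intro t i; simp
    | succ q ih =>
      intro t i
      rw [Function.iterate_succ_apply', fluctuation_eq wt w hw, map_sub]
      have hsub : (b.repr (WithLp.toLp 2 ((fluctuation w)^[q] t)) - b.repr (T (T (WithLp.toLp 2 ((fluctuation w)^[q] t))))) i
          = b.repr (WithLp.toLp 2 ((fluctuation w)^[q] t)) i - b.repr (T (T (WithLp.toLp 2 ((fluctuation w)^[q] t)))) i := rfl
      rw [hsub, hrepr, hrepr, ih]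
      ring
  set x : EuclideanSpace ℂ (ZMod N) :=
    WithLp.toLp 2 (fun g => (fluctuation w)^[p+1] sE g - (fluctuation w)^[p] sE g) with hxdef
  have hx : x = (WithLp.toLp 2 ((fluctuation w)^[p+1] sE) : EuclideanSpace ℂ (ZMod N))
      - (WithLp.toLp 2 ((fluctuation w)^[p] sE) : EuclideanSpace ℂ (ZMod N)) := rfl
  set K := 1 / (Real.exp 1 * p) with hK
  have hp0 : (0:ℝ) < p := by exact_mod_cast hp
  have hK0 : 0 ≤ K := by positivity
  have hcoef : ∀ i : Fin N, ‖b.repr x i‖ ≤ K * ‖b.repr sE i‖ := by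
    intro i
    have hxr : b.repr x i = ((1 - (μ i : ℂ)^2)^(p+1) - (1 - (μ i : ℂ)^2)^p)
        * b.repr sE i := by
      rw [hx, map_sub]
      have hsub : (b.repr (WithLp.toLp 2 ((fluctuation w)^[p+1] sE) : EuclideanSpace ℂ (ZMod N))
            - b.repr (WithLp.toLp 2 ((fluctuation w)^[p] sE) : EuclideanSpace ℂ (ZMod N))) i
          = b.repr (WithLp.toLp 2 ((fluctuation w)^[p+1] sE) : EuclideanSpace ℂ (ZMod N)) i
            - b.repr (WithLp.toLp 2 ((fluctuation w)^[p] sE) : EuclideanSpace ℂ (ZMod N)) i := rfl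
      rw [hsub, hiter, hiter]
      ring
    rw [hxr, norm_mul]
    apply mul_le_mul_of_nonneg_right _ (norm_nonneg _)
    set l : ℝ := μ i ^ 2 with hl
    have hl0 : 0 ≤ l := sq_nonneg _
    have hl1 : l ≤ 1 := hμ1 i
    have hc : (1 - (μ i : ℂ)^2)^(p+1) - (1 - (μ i : ℂ)^2)^p
        = (((1 - l)^(p+1) - (1 - l)^p : ℝ) : ℂ) := by
      push_cast [hl]
      ring
    rw [hc, Complex.norm_real, Real.norm_eq_abs]
    have hval : (1 - l)^(p+1) - (1 - l)^p = -(l * (1-l)^p) := by ring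
    rw [hval, abs_neg, abs_of_nonneg (mul_nonneg hl0 (pow_nonneg (by linarith) p)), hK]
    exact scalar_ineq p hp hl0 hl1
  have hxs : ‖x‖ ≤ K * ‖sE‖ := by
    have h1 : ‖x‖ = ‖b.repr x‖ := (b.repr.norm_map x).symm
    have h2 : ‖sE‖ = ‖b.repr sE‖ := (b.repr.norm_map sE).symm
    rw [h1, h2, EuclideanSpace.norm_eq, EuclideanSpace.norm_eq]
    have hKs : K * Real.sqrt (∑ i : Fin N, ‖b.repr sE i‖^2)
        = Real.sqrt (∑ i : Fin N, (K * ‖b.repr sE i‖)^2) := by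
      have hsum : ∑ i : Fin N, (K * ‖b.repr sE i‖)^2 = K^2 * ∑ i : Fin N, ‖b.repr sE i‖^2 := by
        rw [Finset.mul_sum]; apply Finset.sum_congr rfl; intro i _; ring
      rw [hsum, Real.sqrt_mul (sq_nonneg K), Real.sqrt_sq hK0]
    rw [hKs]
    apply Real.sqrt_le_sqrt
    apply Finset.sum_le_sum
    intro i _
    have := hcoef i
    nlinarith [norm_nonneg (b.repr x i), norm_nonneg (b.repr sE i)]
  calc l2norm (fun g => (fluctuation w)^[p + 1] sE g - (fluctuation w)^[p] sE g)
      = ‖x‖ := hl2 x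
    _ ≤ K * ‖sE‖ := hxs
    _ = l2norm sE / (Real.exp 1 * p) := by
        rw [hl2 sE, hK]; ring
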